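/- (Corrected multi-class ratio matching identity.) Let p be a strictly positive probability mass function on X = S^d for a finite alphabet S, and q_θ another strictly positive pmf on X. With g(z) = 1/(1+z), the objective ∑_x p(x) ∑_{i=1}^d ∑_{ξ ∈ S} [g(p(ξ, x^{\i})/p(∼ξ, x^{\i})) − g(q_θ(ξ, x^{\i})/q_θ(∼ξ, x^{\i}))]² differs by a constant (independent of θ) from ∑_x p(x) ∑_{i=1}^d [(1 − q_θ(x_i | x^{\i}))² + ∑_{ξ ≠ x_i} q_θ(ξ | x^{\i})²]. -/

import Mathlib

open Finset

noncomputable def cnd {S : Type*} [Fintype S] [DecidableEq S] {d : ℕ}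
    (p : (Fin d → S) → ℝ) (x : Fin d → S) (i : Fin d) (ξ : S) : ℝ :=
  p (Function.update x i ξ) / ∑ η : S, p (Function.update x i η)

lemma key_lemma {S : Type*} [Fintype S] [DecidableEq S] [Nonempty S] {d : ℕ} (i : Fin d)
    (p : (Fin d → S) → ℝ) (hp : ∀ x, 0 < p x)
    (A : (Fin d → S) → S → ℝ)
    (hA : ∀ x η ξ, A (Function.update x i η) ξ = A x ξ) :
    ∑ x, p x * A x (x i)
      = ∑ x, p x * ∑ ξ : S, cnd p x i ξ * A x ξ := by
  classical
  set e := Equiv.funSplitAt i S with he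
  have hsum : ∀ F : (Fin d → S) → ℝ,
      ∑ x, F x = ∑ z : S × ({ j // j ≠ i } → S), F (e.symm z) :=
    fun F => (Fintype.sum_equiv e.symm (fun z => F (e.symm z)) F (fun z => rfl)).symm
  have hi : ∀ (s : S) (y : { j // j ≠ i } → S), (e.symm (s, y)) i = s := by
    intro s y; simp [he, Equiv.funSplitAt]
  have hupd : ∀ (s ξ : S) (y : { j // j ≠ i } → S),
      Function.update (e.symm (s, y)) i ξ = e.symm (ξ, y) := by
    intro s ξ y; funext j
    by_cases h : j = i
    · subst h; simp [he, Equiv.funSplitAt]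
    · simp [he, Equiv.funSplitAt, Function.update, h]
  have hAinv : ∀ (s ξ : S) (y : { j // j ≠ i } → S),
      A (e.symm (s, y)) ξ = A (e.symm (ξ, y)) ξ := by
    intro s ξ y
    conv_lhs => rw [show e.symm (s, y) = Function.update (e.symm (ξ, y)) i s from (hupd ξ s y).symm]
    rw [hA]
  rw [hsum (fun x => p x * A x (x i)), hsum (fun x => p x * ∑ ξ : S, cnd p x i ξ * A x ξ)]
  rw [Fintype.sum_prod_type]
  conv_rhs => rw [Fintype.sum_prod_type]
  rw [Finset.sum_comm]
  conv_rhs => rw [Finset.sum_comm]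
  refine Finset.sum_congr rfl fun y _ => ?_
  have hT : 0 < ∑ η : S, p (e.symm (η, y)) :=
    Finset.sum_pos (fun η _ => hp _) univ_nonempty
  have hc : ∀ s ξ : S, cnd p (e.symm (s, y)) i ξ
      = p (e.symm (ξ, y)) / ∑ η : S, p (e.symm (η, y)) := by
    intro s ξ
    simp only [cnd, hupd]
  calc ∑ s : S, p (e.symm (s, y)) * A (e.symm (s, y)) (e.symm (s, y) i)
      = ∑ s : S, p (e.symm (s, y)) * A (e.symm (s, y)) s := by
        refine Finset.sum_congr rfl fun s _ => by rw [hi]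
    _ = ∑ s : S, p (e.symm (s, y)) * ∑ ξ : S, cnd p (e.symm (s, y)) i ξ * A (e.symm (s, y)) ξ := by
        have key : ∀ s : S, ∑ ξ : S, cnd p (e.symm (s, y)) i ξ * A (e.symm (s, y)) ξ
            = (∑ ξ : S, p (e.symm (ξ, y)) * A (e.symm (ξ, y)) ξ) / ∑ η : S, p (e.symm (η, y)) := by
          intro s
          rw [Finset.sum_div]
          refine Finset.sum_congr rfl fun ξ _ => ?_
          rw [hc, hAinv]; ring
        simp only [key]
        rw [← Finset.sum_mul, mul_comm, div_mul_cancel₀ _ hT.ne']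

lemma gform {S : Type*} [Fintype S] [DecidableEq S] (hS : 1 < Fintype.card S)
    (a : S → ℝ) (ha : ∀ s, 0 < a s) (ξ : S) :
    (1 + a ξ / ∑ η ∈ univ.erase ξ, a η)⁻¹ = 1 - a ξ / ∑ η, a η := by
  have hT : 0 < ∑ η, a η :=
    Finset.sum_pos (fun η _ => ha η) (Finset.univ_nonempty_iff.mpr
      (Fintype.card_pos_iff.mp (by omega)))
  have hne : (univ.erase ξ).Nonempty := by
    rw [← Finset.card_pos, Finset.card_erase_of_mem (mem_univ ξ), Finset.card_univ]
    omega
  have hE : 0 < ∑ η ∈ univ.erase ξ, a η := Finset.sum_pos (fun η _ => ha η) hne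
  have he : ∑ η ∈ univ.erase ξ, a η = (∑ η, a η) - a ξ :=
    Finset.sum_erase_eq_sub (mem_univ ξ)
  rw [he] at hE ⊢
  field_simp
  rw [sub_add_cancel, div_self hT.ne']

/-- Corrected multi-class ratio matching identity: with g(z) = 1/(1+z), the
generalized ratio matching objective differs by a θ-independent constant from the
simplified objective. -/
theorem corrected_ratio_matching {S : Type*} [Fintype S] [DecidableEq S]
    (hS : 1 < Fintype.card S) {d : ℕ} {Θ : Type*}
    (p : (Fin d → S) → ℝ) (hp : ∀ x, 0 < p x) (hps : ∑ x, p x = 1)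
    (q : Θ → (Fin d → S) → ℝ) (hq : ∀ θ x, 0 < q θ x)
    (hqs : ∀ θ, ∑ x, q θ x = 1) :
    ∃ C : ℝ, ∀ θ : Θ,
      ∑ x, p x * ∑ i : Fin d, ∑ ξ : S,
          ((1 + p (Function.update x i ξ)
                / ∑ η ∈ univ.erase ξ, p (Function.update x i η))⁻¹
            - (1 + q θ (Function.update x i ξ)
                / ∑ η ∈ univ.erase ξ, q θ (Function.update x i η))⁻¹) ^ 2
        = (∑ x, p x * ∑ i : Fin d,
            ((1 - q θ (Function.update x i (x i))
                / ∑ η : S, q θ (Function.update x i η)) ^ 2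
              + ∑ ξ ∈ univ.erase (x i),
                  (q θ (Function.update x i ξ)
                    / ∑ η : S, q θ (Function.update x i η)) ^ 2)) + C := by
  classical
  haveI : Nonempty S := Fintype.card_pos_iff.mp (by omega)
  refine ⟨∑ x, p x * ∑ i : Fin d, ((∑ ξ : S, cnd p x i ξ ^ 2) - 1), fun θ => ?_⟩
  -- Step A : rewrite the LHS
  have hA : ∑ x, p x * ∑ i : Fin d, ∑ ξ : S,
        ((1 + p (Function.update x i ξ)
              / ∑ η ∈ univ.erase ξ, p (Function.update x i η))⁻¹
          - (1 + q θ (Function.update x i ξ)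
              / ∑ η ∈ univ.erase ξ, q θ (Function.update x i η))⁻¹) ^ 2
      = ∑ x, p x * ∑ i : Fin d,
          ((∑ ξ : S, cnd (q θ) x i ξ ^ 2) + (∑ ξ : S, cnd p x i ξ ^ 2)
            - 2 * ∑ ξ : S, cnd p x i ξ * cnd (q θ) x i ξ) := by
    refine Finset.sum_congr rfl fun x _ => ?_
    congr 1
    refine Finset.sum_congr rfl fun i _ => ?_
    have h1 : ∀ ξ : S, ((1 + p (Function.update x i ξ)
              / ∑ η ∈ univ.erase ξ, p (Function.update x i η))⁻¹
          - (1 + q θ (Function.update x i ξ)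
              / ∑ η ∈ univ.erase ξ, q θ (Function.update x i η))⁻¹) ^ 2
        = (cnd (q θ) x i ξ - cnd p x i ξ) ^ 2 := by
      intro ξ
      rw [gform hS (fun η => p (Function.update x i η)) (fun η => hp _) ξ,
        gform hS (fun η => q θ (Function.update x i η)) (fun η => hq θ _) ξ]
      simp only [cnd]
      ring
    simp only [h1]
    have h2 : ∀ ξ : S, (cnd (q θ) x i ξ - cnd p x i ξ) ^ 2
        = cnd (q θ) x i ξ ^ 2 + cnd p x i ξ ^ 2 - 2 * (cnd p x i ξ * cnd (q θ) x i ξ) := by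
      intro ξ; ring
    simp only [h2]
    rw [Finset.sum_sub_distrib, Finset.sum_add_distrib, ← Finset.mul_sum]
  -- Step B : rewrite the RHS main sum
  have hB : ∑ x, p x * ∑ i : Fin d,
        ((1 - q θ (Function.update x i (x i))
            / ∑ η : S, q θ (Function.update x i η)) ^ 2
          + ∑ ξ ∈ univ.erase (x i),
              (q θ (Function.update x i ξ)
                / ∑ η : S, q θ (Function.update x i η)) ^ 2)
      = ∑ x, p x * ∑ i : Fin d,
          (1 - 2 * cnd (q θ) x i (x i) + ∑ ξ : S, cnd (q θ) x i ξ ^ 2) := by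
    refine Finset.sum_congr rfl fun x _ => ?_
    congr 1
    refine Finset.sum_congr rfl fun i _ => ?_
    have h3 : ∑ ξ ∈ univ.erase (x i),
          (q θ (Function.update x i ξ) / ∑ η : S, q θ (Function.update x i η)) ^ 2
        = (∑ ξ : S, cnd (q θ) x i ξ ^ 2) - cnd (q θ) x i (x i) ^ 2 := by
      rw [show (∑ ξ ∈ univ.erase (x i),
          (q θ (Function.update x i ξ) / ∑ η : S, q θ (Function.update x i η)) ^ 2)
          = ∑ ξ ∈ univ.erase (x i), cnd (q θ) x i ξ ^ 2 from rfl]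
      exact Finset.sum_erase_eq_sub (mem_univ (x i))
    rw [h3]
    simp only [cnd]
    ring
  rw [hA, hB]
  -- Step C : reduce to the key lemma
  have hswap : ∀ F : (Fin d → S) → Fin d → ℝ,
      ∑ x, p x * ∑ i : Fin d, F x i = ∑ i : Fin d, ∑ x, p x * F x i := by
    intro F
    simp only [Finset.mul_sum]
    exact Finset.sum_comm
  rw [hswap, hswap, hswap, ← Finset.sum_add_distrib]
  refine Finset.sum_congr rfl fun i _ => ?_
  have hkey : ∑ x, p x * cnd (q θ) x i (x i)
      = ∑ x, p x * ∑ ξ : S, cnd p x i ξ * cnd (q θ) x i ξ :=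
    key_lemma i p hp (fun x ξ => cnd (q θ) x i ξ)
      (fun x η ξ => by simp only [cnd, Function.update_idem])
  calc ∑ x, p x * ((∑ ξ : S, cnd (q θ) x i ξ ^ 2) + (∑ ξ : S, cnd p x i ξ ^ 2)
          - 2 * ∑ ξ : S, cnd p x i ξ * cnd (q θ) x i ξ)
      = ∑ x, ((p x * (1 - 2 * cnd (q θ) x i (x i) + ∑ ξ : S, cnd (q θ) x i ξ ^ 2)
            + p x * ((∑ ξ : S, cnd p x i ξ ^ 2) - 1))
          + 2 * (p x * cnd (q θ) x i (x i)
            - p x * ∑ ξ : S, cnd p x i ξ * cnd (q θ) x i ξ)) := by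
        refine Finset.sum_congr rfl fun x _ => by ring
    _ = (∑ x, (p x * (1 - 2 * cnd (q θ) x i (x i) + ∑ ξ : S, cnd (q θ) x i ξ ^ 2)
            + p x * ((∑ ξ : S, cnd p x i ξ ^ 2) - 1)))
          + 2 * ((∑ x, p x * cnd (q θ) x i (x i))
            - ∑ x, p x * ∑ ξ : S, cnd p x i ξ * cnd (q θ) x i ξ) := by
        rw [Finset.sum_add_distrib, ← Finset.mul_sum, Finset.sum_sub_distrib]
    _ = ∑ x, (p x * (1 - 2 * cnd (q θ) x i (x i) + ∑ ξ : S, cnd (q θ) x i ξ ^ 2)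
            + p x * ((∑ ξ : S, cnd p x i ξ ^ 2) - 1)) := by
        rw [hkey, sub_self, mul_zero, add_zero]
    _ = (∑ x, p x * (1 - 2 * cnd (q θ) x i (x i) + ∑ ξ : S, cnd (q θ) x i ξ ^ 2))
          + ∑ x, p x * ((∑ ξ : S, cnd p x i ξ ^ 2) - 1) := Finset.sum_add_distrib
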